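/- Let (Ω, P) be a probability space, X a type of edge contexts, T ≥ 1, d ≥ 1, and for each k ∈ {1,…,d} and ℓ ∈ {1,…,T} let g_k^(ℓ) : Ω → (X → ℝ) be random functions such that the whole doubly-indexed family is independent, each g_k^(ℓ)(x) is bounded with mean zero, and E[g_k^(ℓ)(x)·g_k^(ℓ)(x′)] = κ(x, x′) for a fixed kernel κ. Let 𝒫_L(s) and 𝒫_L(s′) be finite sets of length-L paths represented as tuples (e₁,…,e_L) of contexts in X, with endpoint weights β assigning a real number to each path, and let a_L ∈ ℝ. Define z_k(s) := Σ_{L=1}^{T} a_L Σ_{p∈𝒫_L(s)} (∏_{ℓ=1}^{L} g_k^(ℓ)(e_ℓ(p)))·β(p) and K_d(s, s′) := (1/d)·Σ_{k=1}^{d} z_k(s)·z_k(s′). Then E[K_d(s, s′)] = Σ_{L=1}^{T} a_L² Σ_{p∈𝒫_L(s)} Σ_{q∈𝒫_L(s′)} (∏_{ℓ=1}^{L} κ(e_ℓ(p), f_ℓ(q)))·β(p)·β(q), where p = (e₁,…,e_L) and q = (f₁,…,f_L). -/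

import Mathlib

open MeasureTheory ProbabilityTheory

open Finset
section Helpers
variable {Ω : Type*} [MeasurableSpace Ω] {P : Measure Ω} [IsProbabilityMeasure P]

lemma aux_integrable_of_bdd {f : Ω → ℝ} (hm : Measurable f) (hb : ∃ C, ∀ ω, |f ω| ≤ C) :
    Integrable f P := by
  obtain ⟨C, hC⟩ := hb
  exact (integrable_const C).mono' hm.aestronglyMeasurable
    (ae_of_all _ fun ω => by simpa [Real.norm_eq_abs] using hC ω)

lemma aux_bdd_prod {ι Ω' : Type*} (s : Finset ι) (f : ι → Ω' → ℝ)
    (h : ∀ i ∈ s, ∃ C, ∀ ω, |f i ω| ≤ C) :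
    ∃ C, ∀ ω : Ω', |∏ i ∈ s, f i ω| ≤ C := by
  classical
  induction s using Finset.cons_induction with
  | empty => exact ⟨1, by simp⟩
  | cons i s hi ih =>
    obtain ⟨C1, hC1⟩ := h i (Finset.mem_cons_self i s)
    obtain ⟨C2, hC2⟩ := ih fun j hj => h j (Finset.mem_cons_of_mem hj)
    refine ⟨C1 * C2, fun ω => ?_⟩
    rw [Finset.prod_cons, abs_mul]
    exact mul_le_mul (hC1 ω) (hC2 ω) (abs_nonneg _) ((abs_nonneg _).trans (hC1 ω))

lemma aux_bdd_sum {ι Ω' : Type*} (s : Finset ι) (f : ι → Ω' → ℝ)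
    (h : ∀ i ∈ s, ∃ C, ∀ ω, |f i ω| ≤ C) :
    ∃ C, ∀ ω : Ω', |∑ i ∈ s, f i ω| ≤ C := by
  classical
  induction s using Finset.cons_induction with
  | empty => exact ⟨0, by simp⟩
  | cons i s hi ih =>
    obtain ⟨C1, hC1⟩ := h i (Finset.mem_cons_self i s)
    obtain ⟨C2, hC2⟩ := ih fun j hj => h j (Finset.mem_cons_of_mem hj)
    refine ⟨C1 + C2, fun ω => ?_⟩
    rw [Finset.sum_cons]
    exact (abs_add_le _ _).trans (add_le_add (hC1 ω) (hC2 ω))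

lemma aux_indep_prod {ι : Type*} {f : ι → Ω → ℝ}
    (hindep : iIndepFun f P)
    (hmeas : ∀ i, Measurable (f i)) (hint : ∀ i, Integrable (f i) P) (s : Finset ι) :
    Integrable (fun ω => ∏ i ∈ s, f i ω) P ∧
      ∫ ω, ∏ i ∈ s, f i ω ∂P = ∏ i ∈ s, ∫ ω, f i ω ∂P := by
  classical
  induction s using Finset.cons_induction with
  | empty => constructor <;> simp
  | cons i s hi ih =>
    have hind : IndepFun (fun ω => ∏ j ∈ s, f j ω) (f i) P := by
      have h := hindep.indepFun_finsetProd_of_notMem hmeas hi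
      have : (∏ j ∈ s, f j) = fun ω => ∏ j ∈ s, f j ω := by
        funext ω; simp
      rwa [this] at h
    have h1 : Integrable (fun ω => (∏ j ∈ s, f j ω) * f i ω) P := by
      have h := hind.integrable_mul ih.1 (hint i)
      simpa [Pi.mul_def] using h
    constructor
    · have : (fun ω => ∏ j ∈ Finset.cons i s hi, f j ω)
          = fun ω => (∏ j ∈ s, f j ω) * f i ω := by
        funext ω; rw [Finset.prod_cons]; ring
      rw [this]; exact h1
    · have h2 := hind.integral_mul_eq_mul_integral ih.1.aestronglyMeasurable (hint i).aestronglyMeasurable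
      have h3 : ∫ ω, (∏ j ∈ s, f j ω) * f i ω ∂P
          = (∫ ω, ∏ j ∈ s, f j ω ∂P) * ∫ ω, f i ω ∂P := by
        simpa [Pi.mul_def] using h2
      simp only [Finset.prod_cons]
      calc ∫ ω, f i ω * ∏ j ∈ s, f j ω ∂P
          = ∫ ω, (∏ j ∈ s, f j ω) * f i ω ∂P := by simp [mul_comm]
        _ = (∫ ω, ∏ j ∈ s, f j ω ∂P) * ∫ ω, f i ω ∂P := h3
        _ = _ := by rw [ih.2]; ring

lemma aux_prod_dite {M T : ℕ} (hM : M ≤ T) {R : Type*} [CommMonoid R]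
    (f : (t : ℕ) → t < M → R) :
    (∏ t : Fin T, if h : (t : ℕ) < M then f t h else 1) = ∏ i : Fin M, f i i.2 := by
  have e1 : (∏ t : Fin T, if h : (t : ℕ) < M then f t h else 1)
      = ∏ t ∈ Finset.range T, (if h : t < M then f t h else 1) :=
    Fin.prod_univ_eq_prod_range (fun n => if h : n < M then f n h else 1) T
  have e2 : (∏ t ∈ Finset.range M, (if h : t < M then f t h else 1))
      = ∏ t ∈ Finset.range T, (if h : t < M then f t h else 1) :=
    Finset.prod_subset (Finset.range_subset_range.mpr hM)
      (fun x _ hnx => dif_neg (by simpa using hnx))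
  have e3 : (∏ t ∈ Finset.range M, (if h : t < M then f t h else 1))
      = ∏ i : Fin M, (if h : (i : ℕ) < M then f i h else 1) :=
    Fin.prod_univ_eq_prod_range (fun n => if h : n < M then f n h else 1) M |>.symm
  rw [e1, ← e2, e3]
  exact Finset.prod_congr rfl fun i _ => dif_pos i.2

end Helpers


section Key
variable {Ω X : Type*} [MeasurableSpace Ω] {P : Measure Ω} [IsProbabilityMeasure P]

lemma aux_integrable_of_bdd' {f : Ω → ℝ} (hm : Measurable f) (hb : ∃ C, ∀ ω, |f ω| ≤ C) :
    Integrable f P := by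
  obtain ⟨C, hC⟩ := hb
  exact (integrable_const C).mono' hm.aestronglyMeasurable
    (ae_of_all _ fun ω => by simpa [Real.norm_eq_abs] using hC ω)

/-- The core computation: the expectation of the product of two layer-wise products of
messages factorizes according to independence. -/
lemma key_term {T d : ℕ}
    (g : ℕ → ℕ → Ω → X → ℝ) (κ : X → X → ℝ)
    (hmeas : ∀ k ∈ Finset.Icc 1 d, ∀ ℓ ∈ Finset.Icc 1 T, ∀ x : X,
      Measurable fun ω => g k ℓ ω x)
    (hindep : iIndepFun
      (fun i : Fin d × Fin T => g (i.1.1 + 1) (i.2.1 + 1)) P)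
    (hbdd : ∀ k ∈ Finset.Icc 1 d, ∀ ℓ ∈ Finset.Icc 1 T, ∀ x : X,
      ∃ C : ℝ, ∀ ω, |g k ℓ ω x| ≤ C)
    (hmean : ∀ k ∈ Finset.Icc 1 d, ∀ ℓ ∈ Finset.Icc 1 T, ∀ x : X,
      ∫ ω, g k ℓ ω x ∂P = 0)
    (hker : ∀ k ∈ Finset.Icc 1 d, ∀ ℓ ∈ Finset.Icc 1 T, ∀ x x' : X,
      ∫ ω, g k ℓ ω x * g k ℓ ω x' ∂P = κ x x')
    (k : ℕ) (hk : k ∈ Finset.Icc 1 d) (L L' : ℕ)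
    (hL : L ∈ Finset.Icc 1 T) (hL' : L' ∈ Finset.Icc 1 T)
    (p : Fin L → X) (q : Fin L' → X) :
    ∫ ω, (∏ i : Fin L, g k (i.1 + 1) ω (p i)) * ∏ j : Fin L', g k (j.1 + 1) ω (q j) ∂P =
      ∏ i : Fin d × Fin T,
        (if i.1.1 + 1 = k then
          (if h2 : (i.2 : ℕ) < L then
            (if h2' : (i.2 : ℕ) < L' then κ (p ⟨i.2, h2⟩) (q ⟨i.2, h2'⟩) else 0)
          else (if (i.2 : ℕ) < L' then 0 else 1))
        else 1) := by
  classical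
  simp only [Finset.mem_Icc] at hk hL hL'
  have hkd : k - 1 < d := by omega
  have hLT : L ≤ T := hL.2
  have hL'T : L' ≤ T := hL'.2
  set F : Fin d × Fin T → (X → ℝ) → ℝ := fun i h =>
    if i.1.1 + 1 = k then
      (if h2 : (i.2 : ℕ) < L then h (p ⟨i.2, h2⟩) else 1) *
      (if h2' : (i.2 : ℕ) < L' then h (q ⟨i.2, h2'⟩) else 1)
    else 1 with hF
  set Y : Fin d × Fin T → Ω → ℝ := fun i ω => F i (g (i.1.1 + 1) (i.2.1 + 1) ω) with hY
  have hmemd : ∀ i : Fin d × Fin T, i.1.1 + 1 ∈ Finset.Icc 1 d := by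
    intro i; simp [Finset.mem_Icc]
  have hmemT : ∀ i : Fin d × Fin T, i.2.1 + 1 ∈ Finset.Icc 1 T := by
    intro i; simp [Finset.mem_Icc]
  have hkIcc : k ∈ Finset.Icc 1 d := by simp [Finset.mem_Icc]; omega
  have hFmeas : ∀ i, Measurable (F i) := by
    intro i
    simp only [hF]
    by_cases h : i.1.1 + 1 = k
    · simp only [if_pos h]
      apply Measurable.mul
      · by_cases h2 : (i.2 : ℕ) < L
        · simp only [dif_pos h2]; exact measurable_pi_apply _
        · simp only [dif_neg h2]; exact measurable_const
      · by_cases h2 : (i.2 : ℕ) < L'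
        · simp only [dif_pos h2]; exact measurable_pi_apply _
        · simp only [dif_neg h2]; exact measurable_const
    · simp only [if_neg h]; exact measurable_const
  have hgmeas : ∀ i : Fin d × Fin T, Measurable (g (i.1.1 + 1) (i.2.1 + 1)) := by
    intro i
    rw [measurable_pi_iff]
    exact fun x => hmeas _ (hmemd i) _ (hmemT i) x
  have hYmeas : ∀ i, Measurable (Y i) := fun i => (hFmeas i).comp (hgmeas i)
  have hYindep : iIndepFun Y P :=
    hindep.comp F hFmeas
  have hYbdd : ∀ i, ∃ C, ∀ ω, |Y i ω| ≤ C := by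
    intro i
    by_cases hik : i.1.1 + 1 = k
    · rcases Nat.lt_or_ge (i.2 : ℕ) L with h1 | h1 <;>
        rcases Nat.lt_or_ge (i.2 : ℕ) L' with h2 | h2
      · obtain ⟨C1, hC1⟩ := hbdd _ hkIcc _ (hmemT i) (p ⟨i.2, h1⟩)
        obtain ⟨C2, hC2⟩ := hbdd _ hkIcc _ (hmemT i) (q ⟨i.2, h2⟩)
        refine ⟨C1 * C2, fun ω => ?_⟩
        simp only [hY, hF, if_pos hik, dif_pos h1, dif_pos h2, hik, abs_mul]
        exact mul_le_mul (hC1 ω) (hC2 ω) (abs_nonneg _) ((abs_nonneg _).trans (hC1 ω))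
      · obtain ⟨C1, hC1⟩ := hbdd _ hkIcc _ (hmemT i) (p ⟨i.2, h1⟩)
        refine ⟨C1, fun ω => ?_⟩
        simp only [hY, hF, if_pos hik, dif_pos h1, dif_neg (Nat.not_lt.mpr h2), mul_one, hik]
        exact hC1 ω
      · obtain ⟨C2, hC2⟩ := hbdd _ hkIcc _ (hmemT i) (q ⟨i.2, h2⟩)
        refine ⟨C2, fun ω => ?_⟩
        simp only [hY, hF, if_pos hik, dif_pos h2, dif_neg (Nat.not_lt.mpr h1), one_mul, hik]
        exact hC2 ω
      · refine ⟨1, fun ω => ?_⟩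
        simp [hY, hF, if_pos hik, dif_neg (Nat.not_lt.mpr h1), dif_neg (Nat.not_lt.mpr h2)]
    · exact ⟨1, fun ω => by simp [hY, hF, if_neg hik]⟩
  have hYint : ∀ i, Integrable (Y i) P := fun i => aux_integrable_of_bdd' (hYmeas i) (hYbdd i)
  -- rewrite the integrand as the product of the Y i
  have hrw : ∀ ω, (∏ i : Fin L, g k (i.1 + 1) ω (p i)) * ∏ j : Fin L', g k (j.1 + 1) ω (q j)
      = ∏ i : Fin d × Fin T, Y i ω := by
    intro ω
    rw [Fintype.prod_prod_type]
    have hone : ∀ b : Fin d, b ≠ ⟨k - 1, hkd⟩ → ∏ t : Fin T, Y (b, t) ω = 1 := by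
      intro b hb
      have hbk : b.1 + 1 ≠ k := by
        intro hcon
        apply hb
        apply Fin.ext
        simp only []
        omega
      apply Finset.prod_eq_one
      intro t _
      simp [hY, hF, if_neg hbk]
    rw [Finset.prod_eq_single_of_mem (⟨k - 1, hkd⟩ : Fin d) (Finset.mem_univ _)
      (fun b _ hb => hone b hb)]
    have hkk : (⟨k - 1, hkd⟩ : Fin d).1 + 1 = k := by simp; omega
    have : ∀ t : Fin T, Y (⟨k - 1, hkd⟩, t) ω
        = (if h2 : (t : ℕ) < L then g k (t.1 + 1) ω (p ⟨t, h2⟩) else 1) *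
          (if h2' : (t : ℕ) < L' then g k (t.1 + 1) ω (q ⟨t, h2'⟩) else 1) := by
      intro t
      simp only [hY, hF, if_pos hkk, hkk]
    rw [Finset.prod_congr rfl fun t _ => this t, Finset.prod_mul_distrib,
      aux_prod_dite hLT (fun t h => g k (t + 1) ω (p ⟨t, h⟩)),
      aux_prod_dite hL'T (fun t h => g k (t + 1) ω (q ⟨t, h⟩))]
  simp_rw [hrw]
  rw [(aux_indep_prod hYindep hYmeas hYint Finset.univ).2]
  apply Finset.prod_congr rfl
  intro i _
  by_cases hik : i.1.1 + 1 = k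
  · rw [if_pos hik]
    rcases Nat.lt_or_ge (i.2 : ℕ) L with h1 | h1 <;>
      rcases Nat.lt_or_ge (i.2 : ℕ) L' with h2 | h2
    · have hYe : Y i = fun ω => g k (i.2.1 + 1) ω (p ⟨i.2, h1⟩) * g k (i.2.1 + 1) ω (q ⟨i.2, h2⟩) := by
        funext ω; simp only [hY, hF, if_pos hik, dif_pos h1, dif_pos h2, hik]
      simp only [hYe]
      rw [hker _ hkIcc _ (hmemT i), dif_pos h1, dif_pos h2]
    · have hYe : Y i = fun ω => g k (i.2.1 + 1) ω (p ⟨i.2, h1⟩) := by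
        funext ω
        simp only [hY, hF, if_pos hik, dif_pos h1, dif_neg (Nat.not_lt.mpr h2), mul_one, hik]
      simp only [hYe]
      rw [hmean _ hkIcc _ (hmemT i), dif_pos h1, dif_neg (Nat.not_lt.mpr h2)]
    · have hYe : Y i = fun ω => g k (i.2.1 + 1) ω (q ⟨i.2, h2⟩) := by
        funext ω
        simp only [hY, hF, if_pos hik, dif_pos h2, dif_neg (Nat.not_lt.mpr h1), one_mul, hik]
      simp only [hYe]
      rw [hmean _ hkIcc _ (hmemT i), dif_neg (Nat.not_lt.mpr h1), if_pos h2]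
    · have hYe : Y i = fun _ => (1 : ℝ) := by
        funext ω
        simp only [hY, hF, if_pos hik, dif_neg (Nat.not_lt.mpr h1), dif_neg (Nat.not_lt.mpr h2),
          mul_one]
      simp only [hYe]
      rw [dif_neg (Nat.not_lt.mpr h1), if_neg (Nat.not_lt.mpr h2)]
      simp
  · rw [if_neg hik]
    have hYe : Y i = fun _ => (1 : ℝ) := by
      funext ω; simp only [hY, hF, if_neg hik]
    simp only [hYe]
    simp

end Key
lemma aux_bdd_mul {Ω' : Type*} {f h : Ω' → ℝ} (hf : ∃ C, ∀ ω, |f ω| ≤ C)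
    (hh : ∃ C, ∀ ω, |h ω| ≤ C) : ∃ C, ∀ ω, |f ω * h ω| ≤ C := by
  obtain ⟨C1, h1⟩ := hf
  obtain ⟨C2, h2⟩ := hh
  exact ⟨C1 * C2, fun ω => by
    rw [abs_mul]
    exact mul_le_mul (h1 ω) (h2 ω) (abs_nonneg _) ((abs_nonneg _).trans (h1 ω))⟩

lemma Vprod_diag {X : Type*} (κ : X → X → ℝ) {T d k L : ℕ}
    (hk1 : 1 ≤ k) (hkd : k ≤ d) (hLT : L ≤ T) (p q : Fin L → X) :
    (∏ i : Fin d × Fin T,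
      (if i.1.1 + 1 = k then
        (if h2 : (i.2 : ℕ) < L then
          (if h2' : (i.2 : ℕ) < L then κ (p ⟨i.2, h2⟩) (q ⟨i.2, h2'⟩) else 0)
        else (if (i.2 : ℕ) < L then 0 else 1))
      else 1)) = ∏ i : Fin L, κ (p i) (q i) := by
  have hkd' : k - 1 < d := by omega
  rw [Fintype.prod_prod_type]
  rw [Finset.prod_eq_single_of_mem (⟨k - 1, hkd'⟩ : Fin d) (Finset.mem_univ _)
    (fun b _ hb => Finset.prod_eq_one fun t _ => by
      refine if_neg fun hcon => hb (Fin.ext ?_)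
      simp only [] at hcon ⊢
      omega)]
  have hkk : ((⟨k - 1, hkd'⟩ : Fin d) : ℕ) + 1 = k := by simp; omega
  have e : ∀ t : Fin T,
      (if ((⟨k - 1, hkd'⟩ : Fin d) : ℕ) + 1 = k then
        (if h2 : (t : ℕ) < L then
          (if h2' : (t : ℕ) < L then κ (p ⟨t, h2⟩) (q ⟨t, h2'⟩) else 0)
        else (if (t : ℕ) < L then 0 else 1))
      else 1)
      = if h2 : (t : ℕ) < L then κ (p ⟨t, h2⟩) (q ⟨t, h2⟩) else 1 := by
    intro t
    rw [if_pos hkk]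
    by_cases h2 : (t : ℕ) < L
    · rw [dif_pos h2, dif_pos h2, dif_pos h2]
    · rw [dif_neg h2, dif_neg h2, if_neg h2]
  rw [Finset.prod_congr rfl fun t _ => e t,
    aux_prod_dite hLT (fun t h => κ (p ⟨t, h⟩) (q ⟨t, h⟩))]

lemma Vprod_offdiag {X : Type*} (κ : X → X → ℝ) {T d k L L' : ℕ}
    (hk1 : 1 ≤ k) (hkd : k ≤ d) (hLT : L ≤ T) (hL'T : L' ≤ T) (hne : L ≠ L')
    (p : Fin L → X) (q : Fin L' → X) :
    (∏ i : Fin d × Fin T,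
      (if i.1.1 + 1 = k then
        (if h2 : (i.2 : ℕ) < L then
          (if h2' : (i.2 : ℕ) < L' then κ (p ⟨i.2, h2⟩) (q ⟨i.2, h2'⟩) else 0)
        else (if (i.2 : ℕ) < L' then 0 else 1))
      else 1)) = 0 := by
  have hkd' : k - 1 < d := by omega
  have hmT : min L L' < T := by omega
  set i0 : Fin d × Fin T := (⟨k - 1, hkd'⟩, ⟨min L L', hmT⟩) with hi0
  apply Finset.prod_eq_zero (Finset.mem_univ i0)
  have hkk : (i0.1 : ℕ) + 1 = k := by simp [hi0]; omega
  rw [if_pos hkk]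
  rcases Nat.lt_or_ge L L' with hcase | hcase
  · have h1 : ¬ ((i0.2 : ℕ) < L) := by simp [hi0]; omega
    have h2 : (i0.2 : ℕ) < L' := by simp [hi0]; omega
    rw [dif_neg h1, if_pos h2]
  · have hLL' : L' < L := by omega
    have h1 : (i0.2 : ℕ) < L := by simp [hi0]; omega
    have h2 : ¬ ((i0.2 : ℕ) < L') := by simp [hi0]; omega
    rw [dif_pos h1, dif_neg h2]


/-- The frozen-NBFNet random feature of a source node: the `k`-th coordinate aggregates,
over all typed paths out of the source (given as tuples of edge contexts), the product of
the layer-wise random messages, weighted by length weights `a` and endpoint weights `β`. -/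
noncomputable def zfeat {Ω X : Type*} (g : ℕ → ℕ → Ω → X → ℝ) (a : ℕ → ℝ) (T : ℕ)
    (paths : (L : ℕ) → Finset (Fin L → X)) (β : (L : ℕ) → (Fin L → X) → ℝ)
    (k : ℕ) (ω : Ω) : ℝ :=
  ∑ L ∈ Finset.Icc 1 T, a L *
    ∑ p ∈ paths L, (∏ i : Fin L, g k (i.1 + 1) ω (p i)) * β L p

theorem stmt14 {Ω X : Type*} [MeasurableSpace Ω] (P : Measure Ω) [IsProbabilityMeasure P]
    (T d : ℕ) (hT : 1 ≤ T) (hd : 1 ≤ d)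
    (g : ℕ → ℕ → Ω → X → ℝ) (κ : X → X → ℝ)
    (hmeas : ∀ k ∈ Finset.Icc 1 d, ∀ ℓ ∈ Finset.Icc 1 T, ∀ x : X,
      Measurable fun ω => g k ℓ ω x)
    (hindep : iIndepFun
      (fun i : Fin d × Fin T => g (i.1.1 + 1) (i.2.1 + 1)) P)
    (hbdd : ∀ k ∈ Finset.Icc 1 d, ∀ ℓ ∈ Finset.Icc 1 T, ∀ x : X,
      ∃ C : ℝ, ∀ ω, |g k ℓ ω x| ≤ C)
    (hmean : ∀ k ∈ Finset.Icc 1 d, ∀ ℓ ∈ Finset.Icc 1 T, ∀ x : X,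
      ∫ ω, g k ℓ ω x ∂P = 0)
    (hker : ∀ k ∈ Finset.Icc 1 d, ∀ ℓ ∈ Finset.Icc 1 T, ∀ x x' : X,
      ∫ ω, g k ℓ ω x * g k ℓ ω x' ∂P = κ x x')
    (Ppaths Qpaths : (L : ℕ) → Finset (Fin L → X))
    (βP βQ : (L : ℕ) → (Fin L → X) → ℝ) (a : ℕ → ℝ) :
    ∫ ω, (1 / (d : ℝ)) * ∑ k ∈ Finset.Icc 1 d,
        zfeat g a T Ppaths βP k ω * zfeat g a T Qpaths βQ k ω ∂P =
      ∑ L ∈ Finset.Icc 1 T, a L ^ 2 *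
        ∑ p ∈ Ppaths L, ∑ q ∈ Qpaths L,
          (∏ i : Fin L, κ (p i) (q i)) * βP L p * βQ L q := by
  classical
  have hdR : (d : ℝ) ≠ 0 := Nat.cast_ne_zero.mpr (by omega)
  have hGmeas : ∀ k ∈ Finset.Icc 1 d, ∀ L ∈ Finset.Icc 1 T, ∀ r : Fin L → X,
      Measurable fun ω => ∏ i : Fin L, g k (i.1 + 1) ω (r i) := by
    intro k hk L hL r
    apply Finset.measurable_prod
    intro i _
    refine hmeas k hk (i.1 + 1) ?_ (r i)
    simp only [Finset.mem_Icc] at hL ⊢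
    omega
  have hGbdd : ∀ k ∈ Finset.Icc 1 d, ∀ L ∈ Finset.Icc 1 T, ∀ r : Fin L → X,
      ∃ C, ∀ ω, |∏ i : Fin L, g k (i.1 + 1) ω (r i)| ≤ C := by
    intro k hk L hL r
    apply aux_bdd_prod
    intro i _
    refine hbdd k hk (i.1 + 1) ?_ (r i)
    simp only [Finset.mem_Icc] at hL ⊢
    omega
  have hzmeas : ∀ (paths : (L : ℕ) → Finset (Fin L → X)) (β : (L : ℕ) → (Fin L → X) → ℝ),
      ∀ k ∈ Finset.Icc 1 d, Measurable (zfeat g a T paths β k) := by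
    intro paths β k hk
    unfold zfeat
    apply Finset.measurable_sum
    intro L hL
    exact (Finset.measurable_sum _ fun p _ => (hGmeas k hk L hL p).mul_const _).const_mul _
  have hzbdd : ∀ (paths : (L : ℕ) → Finset (Fin L → X)) (β : (L : ℕ) → (Fin L → X) → ℝ),
      ∀ k ∈ Finset.Icc 1 d, ∃ C, ∀ ω, |zfeat g a T paths β k ω| ≤ C := by
    intro paths β k hk
    unfold zfeat
    apply aux_bdd_sum
    intro L hL
    apply aux_bdd_mul ⟨|a L|, fun _ => le_rfl⟩
    apply aux_bdd_sum
    intro p _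
    exact aux_bdd_mul (hGbdd k hk L hL p) ⟨|β L p|, fun _ => le_rfl⟩
  have hzzint : ∀ k ∈ Finset.Icc 1 d,
      Integrable (fun ω => zfeat g a T Ppaths βP k ω * zfeat g a T Qpaths βQ k ω) P :=
    fun k hk => aux_integrable_of_bdd'
      ((hzmeas Ppaths βP k hk).mul (hzmeas Qpaths βQ k hk))
      (aux_bdd_mul (hzbdd Ppaths βP k hk) (hzbdd Qpaths βQ k hk))
  have hkey : ∀ k ∈ Finset.Icc 1 d,
      ∫ ω, zfeat g a T Ppaths βP k ω * zfeat g a T Qpaths βQ k ω ∂P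
      = ∑ L ∈ Finset.Icc 1 T, a L ^ 2 * ∑ p ∈ Ppaths L, ∑ q ∈ Qpaths L,
          (∏ i : Fin L, κ (p i) (q i)) * βP L p * βQ L q := by
    intro k hk
    have hk1 : 1 ≤ k := (Finset.mem_Icc.mp hk).1
    have hkd : k ≤ d := (Finset.mem_Icc.mp hk).2
    have hexp : (fun ω => zfeat g a T Ppaths βP k ω * zfeat g a T Qpaths βQ k ω) = fun ω =>
        ∑ L ∈ Finset.Icc 1 T, ∑ L' ∈ Finset.Icc 1 T, ∑ p ∈ Ppaths L, ∑ q ∈ Qpaths L',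
          (a L * a L' * βP L p * βQ L' q) *
            ((∏ i : Fin L, g k (i.1 + 1) ω (p i)) * ∏ j : Fin L', g k (j.1 + 1) ω (q j)) := by
      funext ω
      simp only [zfeat]
      rw [Finset.sum_mul_sum]
      refine Finset.sum_congr rfl fun L _ => Finset.sum_congr rfl fun L' _ => ?_
      rw [mul_mul_mul_comm, Finset.sum_mul_sum, Finset.mul_sum]
      refine Finset.sum_congr rfl fun p _ => ?_
      rw [Finset.mul_sum]
      refine Finset.sum_congr rfl fun q _ => ?_
      ring
    have htint : ∀ L ∈ Finset.Icc 1 T, ∀ L' ∈ Finset.Icc 1 T,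
        ∀ (p : Fin L → X) (q : Fin L' → X) (c : ℝ),
        Integrable (fun ω => c * ((∏ i : Fin L, g k (i.1 + 1) ω (p i)) *
          ∏ j : Fin L', g k (j.1 + 1) ω (q j))) P := by
      intro L hL L' hL' p q c
      exact (aux_integrable_of_bdd' ((hGmeas k hk L hL p).mul (hGmeas k hk L' hL' q))
        (aux_bdd_mul (hGbdd k hk L hL p) (hGbdd k hk L' hL' q))).const_mul c
    rw [hexp, integral_finset_sum _ (fun L hL => integrable_finset_sum _ fun L' hL' =>
      integrable_finset_sum _ fun p _ => integrable_finset_sum _ fun q _ =>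
        htint L hL L' hL' p q _)]
    refine Finset.sum_congr rfl fun L hL => ?_
    have hLT : L ≤ T := (Finset.mem_Icc.mp hL).2
    rw [integral_finset_sum _ (fun L' hL' => integrable_finset_sum _ fun p _ =>
      integrable_finset_sum _ fun q _ => htint L hL L' hL' p q _)]
    rw [Finset.sum_eq_single_of_mem L hL (fun L' hL' hne => ?_)]
    · rw [integral_finset_sum _ (fun p _ => integrable_finset_sum _ fun q _ =>
        htint L hL L hL p q _), Finset.mul_sum]
      refine Finset.sum_congr rfl fun p _ => ?_
      rw [integral_finset_sum _ (fun q _ => htint L hL L hL p q _), Finset.mul_sum]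
      refine Finset.sum_congr rfl fun q _ => ?_
      rw [integral_const_mul, key_term g κ hmeas hindep hbdd hmean hker k hk L L hL hL p q,
        Vprod_diag κ hk1 hkd hLT p q]
      ring
    · have hL'T : L' ≤ T := (Finset.mem_Icc.mp hL').2
      rw [integral_finset_sum _ (fun p _ => integrable_finset_sum _ fun q _ =>
        htint L hL L' hL' p q _)]
      apply Finset.sum_eq_zero
      intro p _
      rw [integral_finset_sum _ (fun q _ => htint L hL L' hL' p q _)]
      apply Finset.sum_eq_zero
      intro q _
      rw [integral_const_mul, key_term g κ hmeas hindep hbdd hmean hker k hk L L' hL hL' p q,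
        Vprod_offdiag κ hk1 hkd hLT hL'T (Ne.symm hne) p q, mul_zero]
  rw [integral_const_mul, integral_finset_sum _ hzzint, Finset.sum_congr rfl hkey,
    Finset.sum_const, Nat.card_Icc, nsmul_eq_mul]
  have hcard : d + 1 - 1 = d := by omega
  rw [hcard, one_div, inv_mul_cancel_left₀ hdR]
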